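/- The sinθ distance satisfies a triangle-inequality-like bound: for n×r orthonormal-column matrices P₁, P₂, P₃, sinθ_max(P₁, P₃) ≤ sinθ_max(P₁, P₂) + sinθ_max(P₂, P₃). -/

import Mathlib

open Matrix MeasureTheory

noncomputable def spNorm {m n : Type*} [Fintype m] [Fintype n] [DecidableEq n]
    (A : Matrix m n ℝ) : ℝ :=
  ‖LinearMap.toContinuousLinearMap (Matrix.toEuclideanLin A)‖

noncomputable def vnorm {n : Type*} [Fintype n] (x : n → ℝ) : ℝ :=
  Real.sqrt (∑ i, x i ^ 2)

def selMat {n : ℕ} (T : Finset (Fin n)) : Matrix (Fin n) {i // i ∈ T} ℝ :=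
  fun i j => if i = (j : Fin n) then 1 else 0

section aux

set_option linter.unusedSectionVars false
set_option linter.unusedVariables false

variable {l m n p : Type*} [Fintype l] [Fintype m] [Fintype n] [Fintype p]
  [DecidableEq l] [DecidableEq m] [DecidableEq n] [DecidableEq p]

lemma spNorm_apply_le (A : Matrix m n ℝ) (x : EuclideanSpace ℝ n) :
    ‖Matrix.toEuclideanLin A x‖ ≤ spNorm A * ‖x‖ :=
  (LinearMap.toContinuousLinearMap (Matrix.toEuclideanLin A)).le_opNorm x

lemma spNorm_nonneg (A : Matrix m n ℝ) : 0 ≤ spNorm A := norm_nonneg _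

lemma spNorm_le_bound (A : Matrix m n ℝ) (c : ℝ) (hc : 0 ≤ c)
    (h : ∀ x : EuclideanSpace ℝ n, ‖Matrix.toEuclideanLin A x‖ ≤ c * ‖x‖) :
    spNorm A ≤ c :=
  ContinuousLinearMap.opNorm_le_bound _ hc h

lemma toEuclideanLin_mul (A : Matrix m n ℝ) (B : Matrix n p ℝ)
    (x : EuclideanSpace ℝ p) :
    Matrix.toEuclideanLin (A * B) x
      = Matrix.toEuclideanLin A (Matrix.toEuclideanLin B x) := by
  simp [Matrix.toEuclideanLin_apply, Matrix.mulVec_mulVec]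

lemma spNorm_mul_le (A : Matrix m n ℝ) (B : Matrix n p ℝ) :
    spNorm (A * B) ≤ spNorm A * spNorm B := by
  apply spNorm_le_bound _ _ (mul_nonneg (spNorm_nonneg A) (spNorm_nonneg B))
  intro x
  rw [toEuclideanLin_mul, mul_assoc]
  calc ‖Matrix.toEuclideanLin A (Matrix.toEuclideanLin B x)‖
      ≤ spNorm A * ‖Matrix.toEuclideanLin B x‖ := spNorm_apply_le _ _
    _ ≤ spNorm A * (spNorm B * ‖x‖) := by
        exact mul_le_mul_of_nonneg_left (spNorm_apply_le _ _) (spNorm_nonneg A)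

lemma spNorm_add_le (A B : Matrix m n ℝ) :
    spNorm (A + B) ≤ spNorm A + spNorm B := by
  apply spNorm_le_bound _ _ (add_nonneg (spNorm_nonneg A) (spNorm_nonneg B))
  intro x
  rw [map_add, add_mul]
  exact (norm_add_le _ _).trans (add_le_add (spNorm_apply_le _ _) (spNorm_apply_le _ _))

lemma dot_self_nonneg (v : m → ℝ) : 0 ≤ v ⬝ᵥ v :=
  Finset.sum_nonneg fun i _ => mul_self_nonneg _

lemma dot_mulVec_self (A : Matrix m n ℝ) (x : n → ℝ) :
    x ⬝ᵥ ((Aᵀ * A) *ᵥ x) = (A *ᵥ x) ⬝ᵥ (A *ᵥ x) := by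
  rw [← Matrix.mulVec_mulVec, Matrix.dotProduct_mulVec, Matrix.vecMul_transpose]

lemma spNorm_le_one (A : Matrix m n ℝ) (C : Matrix l n ℝ)
    (h : Aᵀ * A + Cᵀ * C = 1) : spNorm A ≤ 1 := by
  apply spNorm_le_bound _ _ zero_le_one
  intro x
  rw [one_mul, EuclideanSpace.norm_eq, EuclideanSpace.norm_eq]
  apply Real.sqrt_le_sqrt
  set v : n → ℝ := fun i => x i with hv
  have hsum : (A *ᵥ v) ⬝ᵥ (A *ᵥ v) + (C *ᵥ v) ⬝ᵥ (C *ᵥ v) = v ⬝ᵥ v := by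
    rw [← dot_mulVec_self, ← dot_mulVec_self, ← dotProduct_add,
      ← Matrix.add_mulVec, h, Matrix.one_mulVec]
  have hC : 0 ≤ (C *ᵥ v) ⬝ᵥ (C *ᵥ v) := dot_self_nonneg _
  have key : (A *ᵥ v) ⬝ᵥ (A *ᵥ v) ≤ v ⬝ᵥ v := by linarith
  have e1 : ∑ i, ‖(Matrix.toEuclideanLin A x) i‖ ^ 2 = (A *ᵥ v) ⬝ᵥ (A *ᵥ v) := by
    simp only [Matrix.toEuclideanLin_apply, dotProduct, Real.norm_eq_abs, sq_abs, sq,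
      hv, PiLp.toLp_apply, abs_mul_abs_self]
  have e2 : ∑ i, ‖x i‖ ^ 2 = v ⬝ᵥ v := by
    simp [dotProduct, Real.norm_eq_abs, sq_abs, sq, hv]
  rw [e1, e2]; exact key

end aux

/-- Triangle-inequality-like bound for the sin-theta distance. -/
theorem stmt3 (n r : ℕ) (P₁ P₂ P₃ : Matrix (Fin n) (Fin r) ℝ)
    (h1 : P₁ᵀ * P₁ = 1) (h2 : P₂ᵀ * P₂ = 1) (h3 : P₃ᵀ * P₃ = 1) :
    spNorm (((1 : Matrix (Fin n) (Fin n) ℝ) - P₁ * P₁ᵀ) * P₃)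
      ≤ spNorm (((1 : Matrix (Fin n) (Fin n) ℝ) - P₁ * P₁ᵀ) * P₂)
        + spNorm (((1 : Matrix (Fin n) (Fin n) ℝ) - P₂ * P₂ᵀ) * P₃) := by
  set Q₁ : Matrix (Fin n) (Fin n) ℝ := 1 - P₁ * P₁ᵀ with hQ1
  set Q₂ : Matrix (Fin n) (Fin n) ℝ := 1 - P₂ * P₂ᵀ with hQ2
  have hPP1 : P₁ * P₁ᵀ * (P₁ * P₁ᵀ) = P₁ * (P₁ᵀ * P₁ * P₁ᵀ) := by
    simp only [Matrix.mul_assoc]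
  have hPP1' : P₁ * P₁ᵀ * (P₁ * P₁ᵀ) = P₁ * P₁ᵀ := by
    rw [hPP1, h1, Matrix.one_mul]
  have hPP2 : P₂ * P₂ᵀ * (P₂ * P₂ᵀ) = P₂ * (P₂ᵀ * P₂ * P₂ᵀ) := by
    simp only [Matrix.mul_assoc]
  have hPP2' : P₂ * P₂ᵀ * (P₂ * P₂ᵀ) = P₂ * P₂ᵀ := by
    rw [hPP2, h2, Matrix.one_mul]
  have hQ1idem : Q₁ * Q₁ = Q₁ := by
    rw [hQ1]; noncomm_ring [hPP1']
  have hQ2idem : Q₂ * Q₂ = Q₂ := by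
    rw [hQ2]; noncomm_ring [hPP2']
  have inner : P₂ * (P₂ᵀ * P₃) + Q₂ * P₃ = P₃ := by
    rw [hQ2, Matrix.sub_mul, Matrix.one_mul, ← Matrix.mul_assoc]
    abel
  have hdecomp : Q₁ * P₃ = Q₁ * P₂ * (P₂ᵀ * P₃) + Q₁ * (Q₂ * P₃) := by
    rw [Matrix.mul_assoc Q₁ P₂, ← Matrix.mul_add, inner]
  have hq : Q₂ * (Q₂ * P₃) = Q₂ * P₃ := by
    rw [← Matrix.mul_assoc, hQ2idem]
  -- spNorm (P₂ᵀ * P₃) ≤ 1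
  have hB : spNorm (P₂ᵀ * P₃) ≤ 1 := by
    apply spNorm_le_one (P₂ᵀ * P₃) (Q₂ * P₃)
    have ht1 : (P₂ᵀ * P₃)ᵀ = P₃ᵀ * P₂ := by
      rw [Matrix.transpose_mul, Matrix.transpose_transpose]
    have hsym2 : Q₂ᵀ = Q₂ := by
      rw [hQ2]; simp [Matrix.transpose_sub, Matrix.transpose_mul]
    have ht2 : (Q₂ * P₃)ᵀ = P₃ᵀ * Q₂ := by
      rw [Matrix.transpose_mul, hsym2]
    rw [ht1, ht2, Matrix.mul_assoc P₃ᵀ Q₂, hq, Matrix.mul_assoc P₃ᵀ P₂,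
      ← Matrix.mul_add, inner, h3]
  -- spNorm Q₁ ≤ 1
  have hQ : spNorm Q₁ ≤ 1 := by
    apply spNorm_le_one Q₁ P₁ᵀ
    have hsym1 : Q₁ᵀ = Q₁ := by
      rw [hQ1]; simp [Matrix.transpose_sub, Matrix.transpose_mul]
    rw [hsym1, Matrix.transpose_transpose, hQ1idem, hQ1]
    abel
  calc spNorm (Q₁ * P₃) = spNorm ((Q₁ * P₂) * (P₂ᵀ * P₃) + Q₁ * (Q₂ * P₃)) := by
        rw [← hdecomp]
    _ ≤ spNorm ((Q₁ * P₂) * (P₂ᵀ * P₃)) + spNorm (Q₁ * (Q₂ * P₃)) := spNorm_add_le _ _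
    _ ≤ spNorm (Q₁ * P₂) * spNorm (P₂ᵀ * P₃) + spNorm Q₁ * spNorm (Q₂ * P₃) :=
        add_le_add (spNorm_mul_le _ _) (spNorm_mul_le _ _)
    _ ≤ spNorm (Q₁ * P₂) * 1 + 1 * spNorm (Q₂ * P₃) := by
        apply add_le_add
        · exact mul_le_mul_of_nonneg_left hB (spNorm_nonneg _)
        · exact mul_le_mul_of_nonneg_right hQ (spNorm_nonneg _)
    _ = spNorm (Q₁ * P₂) + spNorm (Q₂ * P₃) := by ring
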